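/- Let X be the topological space given by the disjoint union of the 2-sphere S² and a two-point discrete space. Then X does not admit the structure of a topological group; i.e., there is no topological group G whose underlying topological space is homeomorphic to X. -/

import Mathlib

/-- The disjoint union of the 2-sphere `S²` and a two-point discrete space
does not admit the structure of a topological group: no topological group is homeomorphic
to it. -/
theorem stmt_9 :
    ∀ (G : Type) [Group G] [TopologicalSpace G] [IsTopologicalGroup G],
      ¬ Nonempty (G ≃ₜ ((Metric.sphere (0 : EuclideanSpace ℝ (Fin 3)) 1) ⊕ Bool)) := by
  intro G _ _ _ ⟨e⟩
  set X := (Metric.sphere (0 : EuclideanSpace ℝ (Fin 3)) 1) ⊕ Bool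
  -- two distinct points on the sphere
  have hp : EuclideanSpace.single (0 : Fin 3) (1:ℝ) ∈
      Metric.sphere (0 : EuclideanSpace ℝ (Fin 3)) 1 := by
    simp [mem_sphere_zero_iff_norm, EuclideanSpace.norm_single]
  have hq : EuclideanSpace.single (1 : Fin 3) (1:ℝ) ∈
      Metric.sphere (0 : EuclideanSpace ℝ (Fin 3)) 1 := by
    simp [mem_sphere_zero_iff_norm, EuclideanSpace.norm_single]
  set P : Metric.sphere (0 : EuclideanSpace ℝ (Fin 3)) 1 := ⟨_, hp⟩
  set Q : Metric.sphere (0 : EuclideanSpace ℝ (Fin 3)) 1 := ⟨_, hq⟩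
  have hPQ : P ≠ Q := by
    intro h
    have : (P : EuclideanSpace ℝ (Fin 3)) 0 = (Q : EuclideanSpace ℝ (Fin 3)) 0 := by rw [h]
    simp [P, Q, EuclideanSpace.single_apply] at this
  -- the sphere is connected
  have hconn : IsConnected (Metric.sphere (0 : EuclideanSpace ℝ (Fin 3)) 1) := by
    apply isConnected_sphere _ _ (by norm_num : (0:ℝ) ≤ 1)
    rw [← Module.finrank_eq_rank, finrank_euclideanSpace_fin]
    norm_num
  -- homeomorphism of X sending inl P to inr true, via group translation
  set c : G := (e.symm (Sum.inl P))⁻¹ * e.symm (Sum.inr true)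
  set H : X ≃ₜ X := e.symm.trans ((Homeomorph.mulRight c).trans e)
  have hHP : H (Sum.inl P) = Sum.inr true := by
    simp [H, c, Homeomorph.mulRight]
  -- the image of the connected sphere under H
  have himg : IsPreconnected (H '' (Set.range (Sum.inl : _ → X))) := by
    haveI : ConnectedSpace (Metric.sphere (0 : EuclideanSpace ℝ (Fin 3)) 1) :=
      Subtype.connectedSpace hconn
    have : IsPreconnected (Set.range (Sum.inl :
        (Metric.sphere (0 : EuclideanSpace ℝ (Fin 3)) 1) → X)) := by
      rw [← Set.image_univ]
      exact isPreconnected_univ.image _ continuous_inl.continuousOn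
    exact this.image _ H.continuous.continuousOn
  -- {inr true} is clopen in X
  have hclopen : IsClopen ({Sum.inr true} : Set X) := by
    have e1 : (Sum.inl ⁻¹' ({Sum.inr true} : Set X)) = ∅ := by ext x; simp
    have e2 : (Sum.inr ⁻¹' ({Sum.inr true} : Set X)) = {true} := by ext x; simp
    constructor
    · rw [isClosed_sum_iff, e1, e2]
      exact ⟨isClosed_empty, isClosed_discrete _⟩
    · rw [isOpen_sum_iff, e1, e2]
      exact ⟨isOpen_empty, isOpen_discrete _⟩
  have hsub : H '' (Set.range (Sum.inl : _ → X)) ⊆ {Sum.inr true} := by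
    apply himg.subset_isClopen hclopen
    exact ⟨Sum.inr true, ⟨Sum.inl P, ⟨P, rfl⟩, hHP⟩, rfl⟩
  have h1 : H (Sum.inl Q) = Sum.inr true := hsub ⟨Sum.inl Q, ⟨Q, rfl⟩, rfl⟩
  have h2 : Sum.inl P = Sum.inl Q := H.injective (hHP.trans h1.symm)
  exact hPQ (Sum.inl.injEq .. ▸ h2 : P = Q)
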